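/- Let M ∈ ℕ, let M_v and M_p be symmetric real M × M matrices, let R be a real M × M matrix, let f : ℝ → ℝᴹ, and let v, p : ℝ → ℝᴹ be functions differentiable at a time t with derivatives v'(t) and p'(t) satisfying M_v · v'(t) = R · p(t) and M_p · p'(t) = f(t) − Rᵀ · v(t). Then the discrete energy function t ↦ v(t)ᵀ M_v v(t) + p(t)ᵀ M_p p(t) is differentiable at t with derivative equal to 2 · p(t)ᵀ f(t). -/

import Mathlib

open Matrix

private lemma quad_deriv {M : ℕ} (A : Matrix (Fin M) (Fin M) ℝ)
    (v : ℝ → Fin M → ℝ) (t : ℝ) (v' : Fin M → ℝ) (hv : HasDerivAt v v' t) :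
    HasDerivAt (fun s => v s ⬝ᵥ A.mulVec (v s))
      (v' ⬝ᵥ A.mulVec (v t) + v t ⬝ᵥ A.mulVec v') t := by
  have hvi : ∀ i, HasDerivAt (fun s => v s i) (v' i) t := hasDerivAt_pi.1 hv
  have h : HasDerivAt (fun s => ∑ i, v s i * ∑ j, A i j * v s j)
      (∑ i, (v' i * ∑ j, A i j * v t j + v t i * ∑ j, A i j * v' j)) t := by
    refine HasDerivAt.fun_sum fun i _ => ?_
    exact (hvi i).mul (HasDerivAt.fun_sum fun j _ => (hvi j).const_mul (A i j))
  have e1 : (fun s => ∑ i, v s i * ∑ j, A i j * v s j)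
      = fun s => v s ⬝ᵥ A.mulVec (v s) := by
    funext s; simp [dotProduct, mulVec]
  have e2 : (∑ i, (v' i * ∑ j, A i j * v t j + v t i * ∑ j, A i j * v' j))
      = v' ⬝ᵥ A.mulVec (v t) + v t ⬝ᵥ A.mulVec v' := by
    simp [dotProduct, mulVec, Finset.sum_add_distrib]
  rw [e1, e2] at h
  exact h

/-- Energy identity for the semi-discrete matrix system with source:
if `M_v v'(t) = R p(t)` and `M_p p'(t) = f(t) − Rᵀ v(t)` with symmetric mass
matrices, then the discrete energy `vᵀ M_v v + pᵀ M_p p` has derivative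
`2 p(t)ᵀ f(t)` at `t`. -/
theorem stmt_10
    (M : ℕ) (Mv Mp R : Matrix (Fin M) (Fin M) ℝ)
    (hMv : Mv.IsSymm) (hMp : Mp.IsSymm)
    (f : ℝ → Fin M → ℝ) (v p : ℝ → Fin M → ℝ) (t : ℝ) (v' p' : Fin M → ℝ)
    (hv : HasDerivAt v v' t) (hp : HasDerivAt p p' t)
    (h1 : Mv.mulVec v' = R.mulVec (p t))
    (h2 : Mp.mulVec p' = f t - Rᵀ.mulVec (v t)) :
    HasDerivAt (fun s => v s ⬝ᵥ Mv.mulVec (v s) + p s ⬝ᵥ Mp.mulVec (p s))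
      (2 * (p t ⬝ᵥ f t)) t := by
  have h := (quad_deriv Mv v t v' hv).add (quad_deriv Mp p t p' hp)
  have key : v' ⬝ᵥ Mv.mulVec (v t) + v t ⬝ᵥ Mv.mulVec v'
      + (p' ⬝ᵥ Mp.mulVec (p t) + p t ⬝ᵥ Mp.mulVec p')
      = 2 * (p t ⬝ᵥ f t) := by
    have symm : ∀ (A : Matrix (Fin M) (Fin M) ℝ), A.IsSymm → ∀ x y : Fin M → ℝ,
        x ⬝ᵥ A.mulVec y = y ⬝ᵥ A.mulVec x := by
      intro A hA x y
      simp only [dotProduct, mulVec, Finset.mul_sum]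
      rw [Finset.sum_comm]
      refine Finset.sum_congr rfl fun i _ => Finset.sum_congr rfl fun j _ => ?_
      rw [← hA.apply i j]; ring
    have sv : v' ⬝ᵥ Mv.mulVec (v t) = v t ⬝ᵥ Mv.mulVec v' := symm Mv hMv v' (v t)
    have sp : p' ⬝ᵥ Mp.mulVec (p t) = p t ⬝ᵥ Mp.mulVec p' := symm Mp hMp p' (p t)
    have cross : v t ⬝ᵥ R.mulVec (p t) = p t ⬝ᵥ Rᵀ.mulVec (v t) := by
      simp only [dotProduct, mulVec, Finset.mul_sum, transpose_apply]
      rw [Finset.sum_comm]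
      refine Finset.sum_congr rfl fun i _ => Finset.sum_congr rfl fun j _ => ?_
      ring
    rw [sv, sp, h1, h2, dotProduct_sub, cross]
    ring
  rw [← key]
  exact h
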